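/- For CPTD maps, diamond fidelity one implies proportionality: if E is a CPTD map and E₀ a CPTP map on L(H_i), and F_◇(E,E₀) = 1 (equivalently, for every pure bipartite state φ with t(E|φ) > 0, the normalized output (E⊗𝟙)[φ]/t(E|φ) equals (E₀⊗𝟙)[φ]), then there exists t ∈ (0,1] such that E = t·E₀. -/

import Mathlib

open Matrix Kronecker MeasureTheory ComplexOrder

noncomputable section

def msqrt {α : Type*} [Fintype α] [DecidableEq α] (A : Matrix α α ℂ) : Matrix α α ℂ :=
  open scoped Classical in
  if h : A.PosSemidef then
    h.1.eigenvectorUnitary.1 * diagonal ((↑) ∘ (√·) ∘ h.1.eigenvalues) *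
      (star h.1.eigenvectorUnitary : Matrix α α ℂ)
  else 0

def fid {α : Type*} [Fintype α] [DecidableEq α] (ρ σ : Matrix α α ℂ) : ℝ :=
  ((msqrt (msqrt ρ * σ * msqrt ρ)).trace).re ^ 2

def sineDist {α : Type*} [Fintype α] [DecidableEq α] (ρ σ : Matrix α α ℂ) : ℝ :=
  Real.sqrt (1 - fid ρ σ)

def traceDist {α : Type*} [Fintype α] [DecidableEq α] (ρ σ : Matrix α α ℂ) : ℝ :=
  (1/2) * ((msqrt ((ρ - σ)ᴴ * (ρ - σ))).trace).re

def IsDensity {α : Type*} [Fintype α] (ρ : Matrix α α ℂ) : Prop :=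
  ρ.PosSemidef ∧ ρ.trace = 1

def IsPureState {α : Type*} [Fintype α] (ρ : Matrix α α ℂ) : Prop :=
  IsDensity ρ ∧ ∃ ψ : α → ℂ, ρ = Matrix.vecMulVec ψ (star ψ)

def tr' {α : Type*} [Fintype α] (A : Matrix α α ℂ) : ℝ := A.trace.re

def nstate {α : Type*} [Fintype α] (ρ : Matrix α α ℂ) : Matrix α α ℂ :=
  (((tr' ρ : ℝ) : ℂ))⁻¹ • ρ

def IsCPTD {α β : Type*} [Fintype α] [Fintype β] [DecidableEq α] [DecidableEq β]
    (E : Matrix α α ℂ →ₗ[ℂ] Matrix β β ℂ) : Prop :=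
  ∃ (k : ℕ) (K : Fin k → Matrix β α ℂ),
    (∀ ρ, E ρ = ∑ i, K i * ρ * (K i)ᴴ) ∧ (1 - ∑ i, (K i)ᴴ * K i).PosSemidef

def IsCPTP {α β : Type*} [Fintype α] [Fintype β] [DecidableEq α] [DecidableEq β]
    (E : Matrix α α ℂ →ₗ[ℂ] Matrix β β ℂ) : Prop :=
  ∃ (k : ℕ) (K : Fin k → Matrix β α ℂ),
    (∀ ρ, E ρ = ∑ i, K i * ρ * (K i)ᴴ) ∧ (∑ i, (K i)ᴴ * K i = 1)

def tensId {α β γ : Type*} [Fintype α]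
    (E : Matrix α α ℂ → Matrix β β ℂ)
    (ρ : Matrix (α × γ) (α × γ) ℂ) : Matrix (β × γ) (β × γ) ℂ :=
  Matrix.of fun p q => E (Matrix.of fun a b => ρ (a, p.2) (b, q.2)) p.1 q.1

def maxEnt (d : ℕ) : Matrix (Fin d × Fin d) (Fin d × Fin d) ℂ :=
  Matrix.of fun p q => if p.1 = p.2 ∧ q.1 = q.2 then ((d : ℂ))⁻¹ else 0

def ptraceSnd {α β : Type*} [Fintype β] (ρ : Matrix (α × β) (α × β) ℂ) : Matrix α α ℂ :=
  Matrix.of fun a b => ∑ j, ρ (a, j) (b, j)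

def ptraceFst {α β : Type*} [Fintype α] (ρ : Matrix (α × β) (α × β) ℂ) : Matrix β β ℂ :=
  Matrix.of fun i j => ∑ a, ρ (a, i) (a, j)

def choiSine {m n : ℕ} (E₁ E₂ : Matrix (Fin m) (Fin m) ℂ →ₗ[ℂ] Matrix (Fin n) (Fin n) ℂ) : ℝ :=
  sineDist (nstate (tensId (⇑E₁) (maxEnt m))) (nstate (tensId (⇑E₂) (maxEnt m)))

def diamondSine {m n : ℕ} (E₁ E₂ : Matrix (Fin m) (Fin m) ℂ →ₗ[ℂ] Matrix (Fin n) (Fin n) ℂ) : ℝ :=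
  sSup { x | ∃ ρ : Matrix (Fin m × Fin m) (Fin m × Fin m) ℂ, IsPureState ρ ∧
    tr' (tensId (⇑E₁) ρ) ≠ 0 ∧ tr' (tensId (⇑E₂) ρ) ≠ 0 ∧
    x = sineDist (nstate (tensId (⇑E₁) ρ)) (nstate (tensId (⇑E₂) ρ)) }

section Aux

variable {d : ℕ}

lemma aux_sum_stdBasisMatrix_diag (d : ℕ) :
    ∑ i : Fin d, Matrix.single i i (1 : ℂ) = 1 := by
  ext a b
  simp only [Finset.sum_apply, Matrix.sum_apply, Matrix.single, Matrix.of_apply,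
    Matrix.one_apply]
  rw [Finset.sum_eq_single a]
  · by_cases hab : a = b <;> simp [hab, eq_comm]
  · intro i _ hia
    simp [hia]
  · simp

lemma aux_tensId_maxEnt_apply (E : Matrix (Fin d) (Fin d) ℂ →ₗ[ℂ] Matrix (Fin d) (Fin d) ℂ)
    (p q : Fin d × Fin d) :
    tensId (⇑E) (maxEnt d) p q = (d : ℂ)⁻¹ * E (Matrix.single p.2 q.2 1) p.1 q.1 := by
  have hm : (Matrix.of fun a b => maxEnt d (a, p.2) (b, q.2))
      = (d : ℂ)⁻¹ • Matrix.single p.2 q.2 (1 : ℂ) := by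
    ext a b
    simp only [Matrix.of_apply, maxEnt, Matrix.smul_apply, Matrix.single, smul_eq_mul]
    by_cases h1 : a = p.2 <;> by_cases h2 : b = q.2 <;> simp [h1, h2, eq_comm]
  show E (Matrix.of fun a b => maxEnt d (a, p.2) (b, q.2)) p.1 q.1 = _
  rw [hm, E.map_smul]
  simp

lemma aux_trace_tensId_maxEnt (E : Matrix (Fin d) (Fin d) ℂ →ₗ[ℂ] Matrix (Fin d) (Fin d) ℂ) :
    (tensId (⇑E) (maxEnt d)).trace = (d : ℂ)⁻¹ * (E 1).trace := by
  rw [Matrix.trace]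
  simp only [Matrix.diag]
  calc ∑ p : Fin d × Fin d, tensId (⇑E) (maxEnt d) p p
      = ∑ p : Fin d × Fin d, (d : ℂ)⁻¹ * E (Matrix.single p.2 p.2 1) p.1 p.1 := by
        exact Finset.sum_congr rfl fun p _ => aux_tensId_maxEnt_apply E p p
    _ = (d : ℂ)⁻¹ * ∑ j : Fin d, ∑ i : Fin d, E (Matrix.single j j 1) i i := by
        rw [Fintype.sum_prod_type, Finset.sum_comm]
        simp only [Finset.mul_sum]
    _ = (d : ℂ)⁻¹ * (E 1).trace := by
        congr 1
        rw [← aux_sum_stdBasisMatrix_diag d, map_sum, Matrix.trace_sum]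
        simp only [Matrix.trace, Matrix.diag]

/-- The real number `r` associated to a Kraus family. -/
lemma aux_kraus_trace {k : ℕ} (K : Fin k → Matrix (Fin d) (Fin d) ℂ) :
    (∑ i, (K i)ᴴ * K i).trace =
      ((∑ i, ∑ b, ∑ a, Complex.normSq (K i a b) : ℝ) : ℂ) := by
  push_cast
  rw [Matrix.trace_sum]
  refine Finset.sum_congr rfl fun i _ => ?_
  rw [Matrix.trace]
  simp only [Matrix.diag, Matrix.mul_apply, Matrix.conjTranspose_apply]
  refine Finset.sum_congr rfl fun b _ => ?_
  refine Finset.sum_congr rfl fun a _ => ?_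
  rw [show (star (K i a b) : ℂ) = (starRingEnd ℂ) (K i a b) from rfl,
    ← Complex.normSq_eq_conj_mul_self]

lemma aux_posSemidef_diag_re_nonneg {n : Type*} [Fintype n] [DecidableEq n]
    {A : Matrix n n ℂ} (hA : A.PosSemidef) (j : n) : 0 ≤ A j j := by
  exact hA.diag_nonneg

lemma aux_maxEnt_pure (d : ℕ) (hd : 0 < d) : IsPureState (maxEnt d) := by
  have hsqr : ((Real.sqrt d)⁻¹ * (Real.sqrt d)⁻¹ : ℝ) = (d : ℝ)⁻¹ := by
    rw [← mul_inv, Real.mul_self_sqrt (by positivity)]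
  set ψ : Fin d × Fin d → ℂ := fun p => if p.1 = p.2 then (((Real.sqrt d)⁻¹ : ℝ) : ℂ) else 0
    with hψ
  have hvec : maxEnt d = Matrix.vecMulVec ψ (star ψ) := by
    ext p q
    simp only [Matrix.vecMulVec_apply, Pi.star_apply, hψ]
    have hc : ((d : ℕ) : ℂ)⁻¹ = ((Real.sqrt d : ℝ) : ℂ)⁻¹ * ((Real.sqrt d : ℝ) : ℂ)⁻¹ := by
      rw [← mul_inv, ← Complex.ofReal_mul, Real.mul_self_sqrt (Nat.cast_nonneg d)]
      norm_num
    by_cases h1 : p.1 = p.2 <;> by_cases h2 : q.1 = q.2 <;>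
      simp [maxEnt, h1, h2, Complex.star_def, Complex.conj_ofReal, hc]
  refine ⟨⟨?_, ?_⟩, ψ, hvec⟩
  · rw [hvec, Matrix.vecMulVec_eq (Fin 1)]
    have : Matrix.replicateRow (Fin 1) (star ψ) = (Matrix.replicateCol (Fin 1) ψ)ᴴ := by
      ext a b; simp [Matrix.replicateRow_apply, Matrix.replicateCol_apply]
    rw [this]
    exact Matrix.posSemidef_self_mul_conjTranspose _
  · rw [Matrix.trace]
    simp only [Matrix.diag, maxEnt, Matrix.of_apply]
    have : ∀ p : Fin d × Fin d, (if p.1 = p.2 ∧ p.1 = p.2 then ((d:ℂ))⁻¹ else 0)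
        = if p.1 = p.2 then ((d:ℂ))⁻¹ else 0 := by intro p; by_cases h : p.1 = p.2 <;> simp [h]
    rw [Finset.sum_congr rfl fun p _ => this p, Fintype.sum_prod_type]
    simp [Finset.sum_ite_eq]
    field_simp

end Aux

/-- Diamond fidelity one implies the CPTD map is proportional to the CPTP map. -/
theorem diamond_fidelity_one_implies_proportional {d : ℕ}
    (E E₀ : Matrix (Fin d) (Fin d) ℂ →ₗ[ℂ] Matrix (Fin d) (Fin d) ℂ)
    (hE : IsCPTD E) (hE₀ : IsCPTP E₀) (hne : E ≠ 0)
    (h : ∀ φ : Matrix (Fin d × Fin d) (Fin d × Fin d) ℂ, IsPureState φ →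
      0 < tr' (tensId (⇑E) φ) → nstate (tensId (⇑E) φ) = tensId (⇑E₀) φ) :
    ∃ t : ℝ, 0 < t ∧ t ≤ 1 ∧ E = (t : ℂ) • E₀ := by
  classical
  rcases Nat.eq_zero_or_pos d with hd0 | hd
  · exfalso
    apply hne
    subst hd0
    apply LinearMap.ext
    intro ρ
    ext i j
    exact i.elim0
  obtain ⟨k, K, hEK, hKle⟩ := hE
  set r : ℝ := ∑ i, ∑ b, ∑ a, Complex.normSq (K i a b) with hr
  have hS : (∑ i, (K i)ᴴ * K i).trace = (r : ℂ) := aux_kraus_trace K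
  have hE1 : (E 1).trace = (r : ℂ) := by
    rw [hEK 1]
    simp only [mul_one]
    rw [Matrix.trace_sum]
    have hcomm : ∑ i, (K i * (K i)ᴴ).trace = ∑ i, ((K i)ᴴ * K i).trace :=
      Finset.sum_congr rfl fun i _ => Matrix.trace_mul_comm _ _
    rw [hcomm, ← Matrix.trace_sum, hS]
  have hrnn : 0 ≤ r := by
    apply Finset.sum_nonneg; intro i _
    apply Finset.sum_nonneg; intro b _
    apply Finset.sum_nonneg; intro a _
    exact Complex.normSq_nonneg _
  have hrne : r ≠ 0 := by
    intro h0
    apply hne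
    have h1 : ∀ i ∈ (Finset.univ : Finset (Fin k)),
        ∑ b, ∑ a, Complex.normSq (K i a b) = 0 :=
      (Finset.sum_eq_zero_iff_of_nonneg (fun i _ => Finset.sum_nonneg fun b _ =>
        Finset.sum_nonneg fun a _ => Complex.normSq_nonneg _)).mp (hr ▸ h0)
    have hK0 : ∀ i, K i = 0 := by
      intro i
      have h2 := (Finset.sum_eq_zero_iff_of_nonneg (fun b _ =>
        Finset.sum_nonneg fun a _ => Complex.normSq_nonneg _)).mp
        (h1 i (Finset.mem_univ i))
      ext a b
      have h3 := (Finset.sum_eq_zero_iff_of_nonneg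
        (fun a _ => Complex.normSq_nonneg _)).mp (h2 b (Finset.mem_univ b))
      have := h3 a (Finset.mem_univ a)
      simpa [Complex.normSq_eq_zero] using this
    apply LinearMap.ext
    intro ρ
    simp [hEK, hK0]
  have hrpos : 0 < r := lt_of_le_of_ne hrnn (Ne.symm hrne)
  set t : ℝ := (d : ℝ)⁻¹ * r with ht
  have hdpos : (0 : ℝ) < d := by exact_mod_cast hd
  have htpos : 0 < t := mul_pos (inv_pos.mpr hdpos) hrpos
  have htr : tr' (tensId (⇑E) (maxEnt d)) = t := by
    rw [tr', aux_trace_tensId_maxEnt, hE1]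
    have : ((d : ℂ))⁻¹ * (r : ℂ) = (((d : ℝ)⁻¹ * r : ℝ) : ℂ) := by push_cast; ring
    rw [this, Complex.ofReal_re, ht]
  have key := h (maxEnt d) (aux_maxEnt_pure d hd) (by rw [htr]; exact htpos)
  have htne : ((t : ℝ) : ℂ) ≠ 0 := by
    exact_mod_cast ne_of_gt htpos
  have hChoi : tensId (⇑E) (maxEnt d) = (t : ℂ) • tensId (⇑E₀) (maxEnt d) := by
    rw [← key, nstate, htr, smul_smul, mul_inv_cancel₀ htne, one_smul]
  have hdne : ((d : ℂ))⁻¹ ≠ 0 := by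
    simp only [ne_eq, inv_eq_zero, Nat.cast_eq_zero]
    omega
  have hbasis : ∀ i j : Fin d, E (Matrix.single i j 1)
      = (t : ℂ) • E₀ (Matrix.single i j 1) := by
    intro i j
    ext p q
    have h2 := congrArg (fun M : Matrix (Fin d × Fin d) (Fin d × Fin d) ℂ =>
      M (p, i) (q, j)) hChoi
    simp only [Matrix.smul_apply, smul_eq_mul] at h2
    rw [aux_tensId_maxEnt_apply, aux_tensId_maxEnt_apply] at h2
    simp only [Matrix.smul_apply, smul_eq_mul]
    have h3 : (d : ℂ)⁻¹ * E (Matrix.single i j 1) p q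
        = (d : ℂ)⁻¹ * ((t : ℂ) * E₀ (Matrix.single i j 1) p q) := by
      rw [h2]; ring
    exact mul_left_cancel₀ hdne h3
  refine ⟨t, htpos, ?_, ?_⟩
  · -- t ≤ 1
    have hdiag : 0 ≤ ((1 : Matrix (Fin d) (Fin d) ℂ) - ∑ i, (K i)ᴴ * K i).trace := by
      rw [Matrix.trace]
      apply Finset.sum_nonneg
      intro j _
      exact aux_posSemidef_diag_re_nonneg hKle j
    rw [Matrix.trace_sub, Matrix.trace_one, hS] at hdiag
    have hre := (Complex.le_def.mp hdiag).1
    simp only [Complex.zero_re, Complex.sub_re, Complex.ofReal_re, Complex.natCast_re,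
      Fintype.card_fin] at hre
    rw [ht, inv_mul_le_iff₀ hdpos]
    linarith
  · -- E = t • E₀
    apply LinearMap.ext
    intro ρ
    have hsum : ∀ (F : Matrix (Fin d) (Fin d) ℂ →ₗ[ℂ] Matrix (Fin d) (Fin d) ℂ),
        F ρ = ∑ i, ∑ j, ρ i j • F (Matrix.single i j 1) := by
      intro F
      conv_lhs => rw [Matrix.matrix_eq_sum_single ρ]
      rw [map_sum]
      refine Finset.sum_congr rfl fun i _ => ?_
      rw [map_sum]
      refine Finset.sum_congr rfl fun j _ => ?_
      have h1 : Matrix.single i j (ρ i j) = ρ i j • Matrix.single i j (1 : ℂ) := by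
        rw [Matrix.smul_single]; simp
      rw [h1, F.map_smul]
    rw [LinearMap.smul_apply, hsum E, hsum E₀, Finset.smul_sum]
    refine Finset.sum_congr rfl fun i _ => ?_
    rw [Finset.smul_sum]
    refine Finset.sum_congr rfl fun j _ => ?_
    rw [hbasis i j, smul_comm]
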